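/- For any symmetric matrix A ∈ ℝ^{N×N}, a vector u uniform on the unit sphere S^{N-1}, and F := A^k for a natural number k, E[(u* F u)²] ≤ (1/N²)(3 ∑_i F_{ii}² + ∑_{i≠j} F_{ii}F_{jj} + 2 ∑_{i≠j} F_{ij}²) = ((1/N) Tr F)² + (2/N²) Tr F², where expectation is over u only. -/

import Mathlib

open MeasureTheory Matrix

section Aux
set_option linter.unusedSectionVars false

variable {N : ℕ}

lemma coord_cont (i : Fin N) : Continuous (fun u : EuclideanSpace ℝ (Fin N) => u i) :=
  (continuous_apply i).comp (PiLp.continuous_ofLp 2 _)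

lemma coord_abs_le (u : EuclideanSpace ℝ (Fin N)) (i : Fin N) : |u i| ≤ ‖u‖ := by
  rw [EuclideanSpace.norm_eq, ← Real.sqrt_sq_eq_abs]
  apply Real.sqrt_le_sqrt
  have := Finset.single_le_sum (f := fun j => ‖u j‖ ^ 2) (fun j _ => sq_nonneg _) (Finset.mem_univ i)
  simpa [sq_abs] using this

lemma sum_sq_eq (u : EuclideanSpace ℝ (Fin N)) : ∑ i, u i ^ 2 = ‖u‖ ^ 2 := by
  rw [EuclideanSpace.norm_eq, Real.sq_sqrt]
  · simp [sq_abs]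
  · positivity

variable {μ : Measure (EuclideanSpace ℝ (Fin N))} [IsProbabilityMeasure μ]

lemma integrable_mono4 (hsupp : ∀ᵐ u ∂μ, ‖u‖ = 1) (i j k l : Fin N) :
    Integrable (fun u : EuclideanSpace ℝ (Fin N) => u i * u j * u k * u l) μ := by
  refine ⟨(((((coord_cont i).mul (coord_cont j)).mul (coord_cont k)).mul
    (coord_cont l))).aestronglyMeasurable, ?_⟩
  apply HasFiniteIntegral.of_bounded (C := 1)
  filter_upwards [hsupp] with u hu
  have h : ∀ a : Fin N, |u a| ≤ 1 := fun a => hu ▸ coord_abs_le u a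
  calc ‖u i * u j * u k * u l‖ = |u i| * |u j| * |u k| * |u l| := by
        simp [Real.norm_eq_abs, abs_mul]
    _ ≤ 1 * 1 * 1 * 1 := by
        gcongr <;> first | exact abs_nonneg _ | exact h _
    _ = 1 := by norm_num

/-- Build a linear isometry equiv from an involutive norm-preserving linear map. -/
noncomputable def mkIso (g : EuclideanSpace ℝ (Fin N) →ₗ[ℝ] EuclideanSpace ℝ (Fin N))
    (hg : Function.Involutive g) (hn : ∀ u, ‖g u‖ = ‖u‖) :
    EuclideanSpace ℝ (Fin N) ≃ₗᵢ[ℝ] EuclideanSpace ℝ (Fin N) :=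
  ⟨LinearEquiv.ofInvolutive g hg, hn⟩

lemma mkIso_apply (g : EuclideanSpace ℝ (Fin N) →ₗ[ℝ] EuclideanSpace ℝ (Fin N))
    (hg : Function.Involutive g) (hn : ∀ u, ‖g u‖ = ‖u‖) (u : EuclideanSpace ℝ (Fin N)) :
    mkIso g hg hn u = g u := rfl

lemma integral_isoInv (hinv : ∀ O : EuclideanSpace ℝ (Fin N) ≃ₗᵢ[ℝ] EuclideanSpace ℝ (Fin N),
      μ.map O = μ)
    (e : EuclideanSpace ℝ (Fin N) ≃ₗᵢ[ℝ] EuclideanSpace ℝ (Fin N))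
    (f : EuclideanSpace ℝ (Fin N) → ℝ) (hf : Continuous f) :
    ∫ u, f u ∂μ = ∫ u, f (e u) ∂μ := by
  conv_lhs => rw [← hinv e]
  rw [integral_map (e.continuous.aemeasurable) (hf.aestronglyMeasurable)]

/-- sign flip at coordinate `a` as a linear map -/
def flipLM (a : Fin N) : EuclideanSpace ℝ (Fin N) →ₗ[ℝ] EuclideanSpace ℝ (Fin N) where
  toFun u := WithLp.toLp 2 (fun x => if x = a then -u x else u x)
  map_add' u v := by ext x; by_cases h : x = a <;> simp [h, PiLp.add_apply] <;> ring
  map_smul' c u := by ext x; by_cases h : x = a <;> simp [h, PiLp.smul_apply, smul_eq_mul] <;> ring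

lemma flipLM_invol (a : Fin N) : Function.Involutive (flipLM (N := N) a) := by
  intro u; ext x; by_cases h : x = a <;> simp [flipLM, h]

lemma flipLM_norm (a : Fin N) (u : EuclideanSpace ℝ (Fin N)) : ‖flipLM a u‖ = ‖u‖ := by
  rw [EuclideanSpace.norm_eq, EuclideanSpace.norm_eq]
  congr 1
  apply Finset.sum_congr rfl
  intro x _
  by_cases h : x = a <;> simp [flipLM, h]

noncomputable def flipIso (a : Fin N) : EuclideanSpace ℝ (Fin N) ≃ₗᵢ[ℝ] EuclideanSpace ℝ (Fin N) :=
  mkIso (flipLM a) (flipLM_invol a) (flipLM_norm a)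

lemma flipIso_apply (a : Fin N) (u : EuclideanSpace ℝ (Fin N)) (x : Fin N) :
    flipIso a u x = if x = a then -u x else u x := rfl


/-- reflection mixing coordinates `a` and `b` -/
noncomputable def rotLM (a b : Fin N) : EuclideanSpace ℝ (Fin N) →ₗ[ℝ] EuclideanSpace ℝ (Fin N) where
  toFun u := WithLp.toLp 2 (fun x => if x = a then (u a + u b) / Real.sqrt 2
    else if x = b then (u a - u b) / Real.sqrt 2 else u x)
  map_add' u v := by
    ext x
    by_cases h : x = a
    · subst h; simp [PiLp.add_apply]; ring
    · by_cases h' : x = b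
      · subst h'; simp [h, PiLp.add_apply]; ring
      · simp [h, h', PiLp.add_apply]
  map_smul' c u := by
    ext x
    by_cases h : x = a
    · subst h; simp [PiLp.smul_apply, smul_eq_mul]; ring
    · by_cases h' : x = b
      · subst h'; simp [h, PiLp.smul_apply, smul_eq_mul]; ring
      · simp [h, h', PiLp.smul_apply]

lemma rotLM_apply_a (a b : Fin N) (u : EuclideanSpace ℝ (Fin N)) :
    rotLM a b u a = (u a + u b) / Real.sqrt 2 := by simp [rotLM]

lemma rotLM_apply_b (a b : Fin N) (hab : a ≠ b) (u : EuclideanSpace ℝ (Fin N)) :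
    rotLM a b u b = (u a - u b) / Real.sqrt 2 := by
  simp [rotLM, (Ne.symm hab : b ≠ a)]

lemma rotLM_apply_other (a b x : Fin N) (hxa : x ≠ a) (hxb : x ≠ b)
    (u : EuclideanSpace ℝ (Fin N)) : rotLM a b u x = u x := by
  simp [rotLM, hxa, hxb]

lemma mul_self_sqrt2 : Real.sqrt 2 * Real.sqrt 2 = 2 := Real.mul_self_sqrt (by norm_num)

lemma sqrt2_sq : (Real.sqrt 2) ^ 2 = 2 := Real.sq_sqrt (by norm_num)

lemma rotLM_invol (a b : Fin N) (hab : a ≠ b) : Function.Involutive (rotLM (N := N) a b) := by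
  intro u; ext x
  by_cases h : x = a
  · subst h
    rw [rotLM_apply_a, rotLM_apply_a, rotLM_apply_b _ _ hab, ← add_div, div_div,
      mul_self_sqrt2]
    ring
  · by_cases h' : x = b
    · subst h'
      rw [rotLM_apply_b _ _ hab, rotLM_apply_a, rotLM_apply_b _ _ hab, div_sub_div_same, div_div,
        mul_self_sqrt2]
      ring
    · rw [rotLM_apply_other _ _ _ h h', rotLM_apply_other _ _ _ h h']

lemma rotLM_norm (a b : Fin N) (hab : a ≠ b) (u : EuclideanSpace ℝ (Fin N)) :
    ‖rotLM a b u‖ = ‖u‖ := by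
  rw [EuclideanSpace.norm_eq, EuclideanSpace.norm_eq]
  congr 1
  have hb : b ∈ Finset.univ.erase a := Finset.mem_erase.2 ⟨Ne.symm hab, Finset.mem_univ b⟩
  have key : ∀ v : EuclideanSpace ℝ (Fin N), ∑ x, ‖v x‖ ^ 2
      = ‖v a‖ ^ 2 + (‖v b‖ ^ 2 + ∑ x ∈ (Finset.univ.erase a).erase b, ‖v x‖ ^ 2) := by
    intro v
    rw [← Finset.add_sum_erase _ _ (Finset.mem_univ a), ← Finset.add_sum_erase _ _ hb]
  rw [key, key]
  have hrest : ∀ x ∈ (Finset.univ.erase a).erase b, rotLM a b u x = u x := by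
    intro x hx
    exact rotLM_apply_other _ _ _ (Finset.mem_erase.1 (Finset.mem_erase.1 hx).2).1
      (Finset.mem_erase.1 hx).1 u
  rw [Finset.sum_congr rfl (fun x hx => by rw [hrest x hx]), rotLM_apply_a,
    rotLM_apply_b _ _ hab]
  simp only [Real.norm_eq_abs, sq_abs]
  rw [div_pow, div_pow, sqrt2_sq]
  ring

noncomputable def rotIso (a b : Fin N) (hab : a ≠ b) :
    EuclideanSpace ℝ (Fin N) ≃ₗᵢ[ℝ] EuclideanSpace ℝ (Fin N) :=
  mkIso (rotLM a b) (rotLM_invol a b hab) (rotLM_norm a b hab)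

lemma rotIso_apply_a (a b : Fin N) (hab : a ≠ b) (u : EuclideanSpace ℝ (Fin N)) :
    rotIso a b hab u a = (u a + u b) / Real.sqrt 2 := rotLM_apply_a a b u

lemma rotIso_apply_b (a b : Fin N) (hab : a ≠ b) (u : EuclideanSpace ℝ (Fin N)) :
    rotIso a b hab u b = (u a - u b) / Real.sqrt 2 := rotLM_apply_b a b hab u

noncomputable def permIso (σ : Equiv.Perm (Fin N)) :
    EuclideanSpace ℝ (Fin N) ≃ₗᵢ[ℝ] EuclideanSpace ℝ (Fin N) :=
  LinearIsometryEquiv.piLpCongrLeft 2 ℝ ℝ σ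

lemma permIso_apply (σ : Equiv.Perm (Fin N)) (u : EuclideanSpace ℝ (Fin N)) (x : Fin N) :
    permIso σ u x = u (σ.symm x) := by
  rw [permIso, LinearIsometryEquiv.piLpCongrLeft_apply]
  rfl

/-- the fourth moment function -/
noncomputable def mm (μ : Measure (EuclideanSpace ℝ (Fin N))) (i j k l : Fin N) : ℝ :=
  ∫ u, u i * u j * u k * u l ∂μ

lemma mm_cont (i j k l : Fin N) :
    Continuous (fun u : EuclideanSpace ℝ (Fin N) => u i * u j * u k * u l) :=
  ((((coord_cont i).mul (coord_cont j)).mul (coord_cont k)).mul (coord_cont l))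

lemma mm_zero (hinv : ∀ O : EuclideanSpace ℝ (Fin N) ≃ₗᵢ[ℝ] EuclideanSpace ℝ (Fin N),
      μ.map O = μ) (i j k l a : Fin N)
    (h : ((if i = a then 1 else 0) + (if j = a then 1 else 0) + (if k = a then 1 else 0)
      + (if l = a then 1 else 0)) % 2 = 1) :
    mm μ i j k l = 0 := by
  have key : mm μ i j k l = - mm μ i j k l := by
    conv_lhs => rw [mm, integral_isoInv hinv (flipIso a) _ (mm_cont i j k l)]
    rw [mm, ← integral_neg]
    apply integral_congr_ae
    filter_upwards with u
    show flipIso a u i * flipIso a u j * flipIso a u k * flipIso a u l = _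
    simp only [flipIso_apply]
    split_ifs at h ⊢ <;> simp_all <;> ring
  linarith

lemma mm_perm (hinv : ∀ O : EuclideanSpace ℝ (Fin N) ≃ₗᵢ[ℝ] EuclideanSpace ℝ (Fin N),
      μ.map O = μ) (σ : Equiv.Perm (Fin N)) (i j k l : Fin N) :
    mm μ i j k l = mm μ (σ i) (σ j) (σ k) (σ l) := by
  rw [mm, integral_isoInv hinv (permIso σ⁻¹) _ (mm_cont i j k l), mm]
  apply integral_congr_ae
  filter_upwards with u
  show permIso σ⁻¹ u i * permIso σ⁻¹ u j * permIso σ⁻¹ u k * permIso σ⁻¹ u l = _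
  simp only [permIso_apply]
  rfl

lemma mm_swap23 (i j k l : Fin N) : mm μ i j k l = mm μ i k j l := by
  unfold mm; apply integral_congr_ae; filter_upwards with u; ring

lemma mm_swap24 (i j k l : Fin N) : mm μ i j k l = mm μ i l k j := by
  unfold mm; apply integral_congr_ae; filter_upwards with u; ring

lemma mm_diag_eq (hinv : ∀ O : EuclideanSpace ℝ (Fin N) ≃ₗᵢ[ℝ] EuclideanSpace ℝ (Fin N),
      μ.map O = μ) (i j : Fin N) : mm μ i i i i = mm μ j j j j := by
  have := mm_perm hinv (Equiv.swap i j) i i i i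
  simpa [Equiv.swap_apply_left] using this

lemma mm_pair_eq (hinv : ∀ O : EuclideanSpace ℝ (Fin N) ≃ₗᵢ[ℝ] EuclideanSpace ℝ (Fin N),
      μ.map O = μ) {i k i' k' : Fin N} (h : i ≠ k) (h' : i' ≠ k') :
    mm μ i i k k = mm μ i' i' k' k' := by
  set σ1 := Equiv.swap i i' with hσ1
  have hk1 : σ1 k ≠ i' := by
    rw [← Equiv.swap_apply_left i i']
    exact fun hc => h (σ1.injective hc).symm
  set σ2 := Equiv.swap (σ1 k) k' with hσ2
  set σ := σ1.trans σ2 with hσ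
  have hi : σ i = i' := by
    have h1 : σ1 i = i' := Equiv.swap_apply_left i i'
    have : σ2 i' = i' := Equiv.swap_apply_of_ne_of_ne (Ne.symm hk1) h'
    simp [hσ, Equiv.trans_apply, h1, this]
  have hk : σ k = k' := by
    simp [hσ, Equiv.trans_apply, hσ2, Equiv.swap_apply_left]
  have := mm_perm hinv σ i i k k
  rw [hi, hk] at this
  exact this

lemma sum_mm_diag (hsupp : ∀ᵐ u ∂μ, ‖u‖ = 1) :
    ∑ i : Fin N, ∑ k : Fin N, mm μ i i k k = 1 := by
  have h1 : ∀ i : Fin N, ∑ k : Fin N, mm μ i i k k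
      = ∫ u, ∑ k : Fin N, u i * u i * u k * u k ∂μ := by
    intro i
    rw [integral_finset_sum _ (fun k _ => integrable_mono4 hsupp i i k k)]
    rfl
  rw [Finset.sum_congr rfl (fun i _ => h1 i),
    ← integral_finset_sum _ (fun i _ =>
      integrable_finset_sum _ (fun k _ => integrable_mono4 hsupp i i k k))]
  have : ∫ u, ∑ i : Fin N, ∑ k : Fin N, u i * u i * u k * u k ∂μ = ∫ (_ : EuclideanSpace ℝ (Fin N)), (1:ℝ) ∂μ := by
    apply integral_congr_ae
    filter_upwards [hsupp] with u hu
    have : ∑ i : Fin N, ∑ k : Fin N, u i * u i * u k * u k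
        = (∑ i, u i ^ 2) * (∑ k, u k ^ 2) := by
      rw [Finset.sum_mul_sum]
      exact Finset.sum_congr rfl fun i _ => Finset.sum_congr rfl fun k _ => by ring
    rw [this, sum_sq_eq, hu]
    norm_num
  rw [this]
  simp

lemma mm_rot (hsupp : ∀ᵐ u ∂μ, ‖u‖ = 1)
    (hinv : ∀ O : EuclideanSpace ℝ (Fin N) ≃ₗᵢ[ℝ] EuclideanSpace ℝ (Fin N), μ.map O = μ)
    (a b : Fin N) (hab : a ≠ b) : mm μ a a a a = 3 * mm μ a a b b := by
  have h41 : Integrable (fun u : EuclideanSpace ℝ (Fin N) => u a * u a * u a * u a) μ :=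
    integrable_mono4 hsupp a a a a
  have h42 : Integrable (fun u : EuclideanSpace ℝ (Fin N) => u a * u a * u a * u b) μ :=
    integrable_mono4 hsupp a a a b
  have h43 : Integrable (fun u : EuclideanSpace ℝ (Fin N) => u a * u a * u b * u b) μ :=
    integrable_mono4 hsupp a a b b
  have h44 : Integrable (fun u : EuclideanSpace ℝ (Fin N) => u a * u b * u b * u b) μ :=
    integrable_mono4 hsupp a b b b
  have h45 : Integrable (fun u : EuclideanSpace ℝ (Fin N) => u b * u b * u b * u b) μ :=
    integrable_mono4 hsupp b b b b
  have hpow : ∀ x y : ℝ, ((x + y) / Real.sqrt 2) ^ 4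
      = (1/4) * (x*x*x*x) + (x*x*x*y) + (3/2) * (x*x*y*y) + (x*y*y*y) + (1/4) * (y*y*y*y) := by
    intro x y
    have h4 : (Real.sqrt 2) ^ 4 = 4 := by
      rw [show (4:ℕ) = 2*2 from rfl, pow_mul, sqrt2_sq]; norm_num
    rw [div_pow, h4]
    ring
  have key : mm μ a a a a
      = ∫ u, ((1/4) * (u a*u a*u a*u a) + (u a*u a*u a*u b) + (3/2) * (u a*u a*u b*u b)
          + (u a*u b*u b*u b) + (1/4) * (u b*u b*u b*u b)) ∂μ := by
    rw [mm, integral_isoInv hinv (rotIso a b hab) _ (mm_cont a a a a)]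
    apply integral_congr_ae
    filter_upwards with u
    show rotIso a b hab u a * rotIso a b hab u a * rotIso a b hab u a * rotIso a b hab u a = _
    rw [rotIso_apply_a]
    have := hpow (u a) (u b)
    calc (u a + u b) / Real.sqrt 2 * ((u a + u b) / Real.sqrt 2) * ((u a + u b) / Real.sqrt 2)
        * ((u a + u b) / Real.sqrt 2) = ((u a + u b) / Real.sqrt 2) ^ 4 := by ring
      _ = _ := this
  have A1 : Integrable (fun u : EuclideanSpace ℝ (Fin N) =>
      1/4 * (u a*u a*u a*u a) + u a*u a*u a*u b) μ := by
    exact (h41.const_mul (1/4)).add h42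
  have A2 : Integrable (fun u : EuclideanSpace ℝ (Fin N) =>
      1/4 * (u a*u a*u a*u a) + u a*u a*u a*u b + 3/2 * (u a*u a*u b*u b)) μ := by
    exact A1.add (h43.const_mul (3/2))
  have A3 : Integrable (fun u : EuclideanSpace ℝ (Fin N) =>
      1/4 * (u a*u a*u a*u a) + u a*u a*u a*u b + 3/2 * (u a*u a*u b*u b)
        + u a*u b*u b*u b) μ := by
    exact A2.add h44
  rw [integral_add A3 (h45.const_mul (1/4)), integral_add A2 h44,
    integral_add A1 (h43.const_mul (3/2)),
    integral_add (h41.const_mul (1/4)) h42, integral_const_mul, integral_const_mul,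
    integral_const_mul] at key
  have e2 : ∫ u, u a * u a * u a * u b ∂μ = 0 := by
    have := mm_zero hinv a a a b b (by simp [hab])
    simpa [mm] using this
  have e4 : ∫ u, u a * u b * u b * u b ∂μ = 0 := by
    have := mm_zero hinv a b b b a (by simp [Ne.symm hab])
    simpa [mm] using this
  have e5 : ∫ u, u b * u b * u b * u b ∂μ = ∫ u, u a * u a * u a * u a ∂μ := by
    have := mm_diag_eq hinv b a
    simpa [mm] using this
  rw [e2, e4, e5] at key
  have : mm μ a a a a = ∫ u, u a * u a * u a * u a ∂μ := rfl
  have hc : mm μ a a b b = ∫ u, u a * u a * u b * u b ∂μ := rfl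
  rw [this, hc]
  linarith [key, this]

lemma quad_sum (F : Matrix (Fin N) (Fin N) ℝ) (d c : ℝ) :
    ∑ i : Fin N, ∑ j : Fin N, ∑ k : Fin N, ∑ l : Fin N, F i j * F k l *
      (if i = j then (if k = l then (if i = k then d else c) else 0)
       else (if (k = i ∧ l = j) ∨ (k = j ∧ l = i) then c else 0))
    = d * ∑ i : Fin N, F i i ^ 2
      + c * ∑ i : Fin N, ∑ k ∈ Finset.univ.erase i, F i i * F k k
      + c * ∑ i : Fin N, ∑ j ∈ Finset.univ.erase i, (F i j * F i j + F i j * F j i) := by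
  have step : ∀ i : Fin N,
      ∑ j : Fin N, ∑ k : Fin N, ∑ l : Fin N, F i j * F k l *
        (if i = j then (if k = l then (if i = k then d else c) else 0)
         else (if (k = i ∧ l = j) ∨ (k = j ∧ l = i) then c else 0))
      = (d * F i i ^ 2 + c * ∑ k ∈ Finset.univ.erase i, F i i * F k k)
        + c * ∑ j ∈ Finset.univ.erase i, (F i j * F i j + F i j * F j i) := by
    intro i
    rw [← Finset.add_sum_erase _ _ (Finset.mem_univ i)]
    congr 1
    · -- diagonal j = i term
      simp only [eq_self_iff_true, if_true]
      have inner : ∀ k : Fin N, ∑ l : Fin N, F i i * F k l *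
          (if k = l then (if i = k then d else c) else 0)
          = F i i * F k k * (if i = k then d else c) := by
        intro k
        rw [Finset.sum_eq_single k]
        · rw [if_pos rfl]
        · intro l _ hlk; rw [if_neg (Ne.symm hlk), mul_zero]
        · intro h; exact absurd (Finset.mem_univ k) h
      rw [Finset.sum_congr rfl fun k _ => inner k, ← Finset.add_sum_erase _ _ (Finset.mem_univ i),
        if_pos rfl]
      have : ∑ k ∈ Finset.univ.erase i, F i i * F k k * (if i = k then d else c)
          = ∑ k ∈ Finset.univ.erase i, F i i * F k k * c := by
        apply Finset.sum_congr rfl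
        intro k hk
        rw [if_neg (Ne.symm (Finset.mem_erase.1 hk).1)]
      rw [this, Finset.mul_sum]
      congr 1
      · ring
      · exact Finset.sum_congr rfl fun k _ => by ring
    · -- off-diagonal j ≠ i terms
      rw [Finset.mul_sum]
      apply Finset.sum_congr rfl
      intro j hj
      have hji : j ≠ i := (Finset.mem_erase.1 hj).1
      simp only [if_neg (Ne.symm hji)]
      -- now : ∑ k ∑ l, F i j * F k l * (if (k=i∧l=j)∨(k=j∧l=i) then c else 0)
      have hval : ∀ k : Fin N, ∑ l : Fin N, F i j * F k l *
          (if (k = i ∧ l = j) ∨ (k = j ∧ l = i) then c else 0)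
          = (if k = i then F i j * F i j * c else 0) + (if k = j then F i j * F j i * c else 0) := by
        intro k
        by_cases hki : k = i
        · subst hki
          rw [if_pos rfl, if_neg (Ne.symm hji)]
          rw [Finset.sum_eq_single j]
          · rw [if_pos (Or.inl ⟨rfl, rfl⟩)]; ring
          · intro l _ hlj
            rw [if_neg, mul_zero]
            rintro (⟨-, h⟩ | ⟨h, -⟩)
            · exact hlj h
            · exact hji h.symm
          · intro h; exact absurd (Finset.mem_univ j) h
        · by_cases hkj : k = j
          · subst hkj
            rw [if_neg hki, if_pos rfl]
            rw [Finset.sum_eq_single i]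
            · rw [if_pos (Or.inr ⟨rfl, rfl⟩)]; ring
            · intro l _ hli
              rw [if_neg, mul_zero]
              rintro (⟨h, -⟩ | ⟨-, h⟩)
              · exact hki h
              · exact hli h
            · intro h; exact absurd (Finset.mem_univ i) h
          · rw [if_neg hki, if_neg hkj]
            rw [Finset.sum_eq_zero]
            · norm_num
            · intro l _
              rw [if_neg, mul_zero]
              rintro (⟨h, -⟩ | ⟨h, -⟩)
              · exact hki h
              · exact hkj h
      rw [Finset.sum_congr rfl fun k _ => hval k, Finset.sum_add_distrib,
        Finset.sum_ite_eq' Finset.univ i, Finset.sum_ite_eq' Finset.univ j]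
      simp only [Finset.mem_univ, if_pos]
      ring
  rw [Finset.sum_congr rfl fun i _ => step i, Finset.sum_add_distrib, Finset.sum_add_distrib,
    Finset.mul_sum, Finset.mul_sum, Finset.mul_sum]


lemma mm_pattern (hinv : ∀ O : EuclideanSpace ℝ (Fin N) ≃ₗᵢ[ℝ] EuclideanSpace ℝ (Fin N),
      μ.map O = μ) (d c : ℝ) (hd : ∀ i, mm μ i i i i = d)
    (hc : ∀ i k : Fin N, i ≠ k → mm μ i i k k = c) (i j k l : Fin N) :
    mm μ i j k l = if i = j then (if k = l then (if i = k then d else c) else 0)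
       else (if (k = i ∧ l = j) ∨ (k = j ∧ l = i) then c else 0) := by
  by_cases hij : i = j
  · rw [if_pos hij]
    by_cases hkl : k = l
    · rw [if_pos hkl]
      by_cases hik : i = k
      · rw [if_pos hik, ← hij, ← hik, ← hkl, hik]; rw [← hik]; exact hd i
      · rw [if_neg hik, ← hij, ← hkl]; exact hc i k hik
    · rw [if_neg hkl]
      by_cases hki : k = i
      · -- indices (i,i,k,l) with k = i, l ≠ k : l appears once
        refine mm_zero hinv i j k l l ?_
        rw [← hij, if_neg (show ¬i = l from fun h => hkl (hki.trans h)), if_neg hkl, if_pos rfl]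
      · -- k appears once
        refine mm_zero hinv i j k l k ?_
        rw [if_neg (show ¬i = k from fun h => hki h.symm), ← hij,
          if_neg (show ¬i = k from fun h => hki h.symm), if_pos rfl,
          if_neg (show ¬l = k from fun h => hkl h.symm)]
  · rw [if_neg hij]
    by_cases hki : k = i
    · by_cases hlj : l = j
      · rw [if_pos (Or.inl ⟨hki, hlj⟩), hki, hlj, mm_swap23]
        exact hc i j hij
      · rw [if_neg (by rintro (⟨-, h⟩ | ⟨h, -⟩); exacts [hlj h, hij (hki.symm.trans h)])]
        -- j appears once
        refine mm_zero hinv i j k l j ?_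
        rw [if_neg hij, if_pos rfl, if_neg (show ¬k = j from fun h => hij (hki.symm.trans h)),
          if_neg hlj]
    · by_cases hkj : k = j
      · by_cases hli : l = i
        · rw [if_pos (Or.inr ⟨hkj, hli⟩), hkj, hli, mm_swap24]
          exact hc i j hij
        · rw [if_neg (by rintro (⟨h, -⟩ | ⟨-, h⟩); exacts [hki h, hli h])]
          -- i appears once
          refine mm_zero hinv i j k l i ?_
          rw [if_pos rfl, if_neg (show ¬j = i from fun h => hij h.symm), if_neg hki, if_neg hli]
      · rw [if_neg (by rintro (⟨h, -⟩ | ⟨h, -⟩); exacts [hki h, hkj h])]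
        by_cases hlk : l = k
        · -- i appears once (j,k,l ≠ i ; l = k ≠ i)
          refine mm_zero hinv i j k l i ?_
          rw [if_pos rfl, if_neg (show ¬j = i from fun h => hij h.symm), if_neg hki,
            if_neg (show ¬l = i from fun h => hki (hlk.symm.trans h))]
        · -- k appears once
          refine mm_zero hinv i j k l k ?_
          rw [if_neg (show ¬i = k from fun h => hki h.symm),
            if_neg (show ¬j = k from fun h => hkj h.symm), if_pos rfl, if_neg hlk]

lemma expand_integral (hsupp : ∀ᵐ u ∂μ, ‖u‖ = 1) (F : Matrix (Fin N) (Fin N) ℝ) :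
    ∫ u, (∑ i : Fin N, ∑ j : Fin N, u i * F i j * u j) ^ 2 ∂μ
      = ∑ i : Fin N, ∑ j : Fin N, ∑ k : Fin N, ∑ l : Fin N, F i j * F k l * mm μ i j k l := by
  have pointwise : ∀ u : EuclideanSpace ℝ (Fin N),
      (∑ i : Fin N, ∑ j : Fin N, u i * F i j * u j) ^ 2
      = ∑ i : Fin N, ∑ j : Fin N, ∑ k : Fin N, ∑ l : Fin N,
          F i j * F k l * (u i * u j * u k * u l) := by
    intro u
    rw [sq, Finset.sum_mul_sum]
    apply Finset.sum_congr rfl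
    intro i _
    rw [Finset.sum_congr rfl (fun k (_ : k ∈ Finset.univ) => Finset.sum_mul_sum
      Finset.univ Finset.univ (fun j => u i * F i j * u j) (fun l => u k * F k l * u l)),
      Finset.sum_comm]
    apply Finset.sum_congr rfl
    intro j _
    apply Finset.sum_congr rfl
    intro k _
    apply Finset.sum_congr rfl
    intro l _
    ring
  have I1 : ∀ i j k l : Fin N, Integrable
      (fun u : EuclideanSpace ℝ (Fin N) => F i j * F k l * (u i * u j * u k * u l)) μ :=
    fun i j k l => (integrable_mono4 hsupp i j k l).const_mul _
  have I2 : ∀ i j k : Fin N, Integrable (fun u : EuclideanSpace ℝ (Fin N) =>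
      ∑ l : Fin N, F i j * F k l * (u i * u j * u k * u l)) μ :=
    fun i j k => integrable_finset_sum _ (fun l _ => I1 i j k l)
  have I3 : ∀ i j : Fin N, Integrable (fun u : EuclideanSpace ℝ (Fin N) =>
      ∑ k : Fin N, ∑ l : Fin N, F i j * F k l * (u i * u j * u k * u l)) μ :=
    fun i j => integrable_finset_sum _ (fun k _ => I2 i j k)
  have I4 : ∀ i : Fin N, Integrable (fun u : EuclideanSpace ℝ (Fin N) =>
      ∑ j : Fin N, ∑ k : Fin N, ∑ l : Fin N, F i j * F k l * (u i * u j * u k * u l)) μ :=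
    fun i => integrable_finset_sum _ (fun j _ => I3 i j)
  rw [integral_congr_ae (Filter.Eventually.of_forall pointwise),
    integral_finset_sum _ (fun i _ => I4 i)]
  apply Finset.sum_congr rfl
  intro i _
  rw [integral_finset_sum _ (fun j _ => I3 i j)]
  apply Finset.sum_congr rfl
  intro j _
  rw [integral_finset_sum _ (fun k _ => I2 i j k)]
  apply Finset.sum_congr rfl
  intro k _
  rw [integral_finset_sum _ (fun l _ => I1 i j k l)]
  apply Finset.sum_congr rfl
  intro l _
  rw [integral_const_mul]
  rfl

lemma eval_and_constraint (hN : 1 ≤ N) (hsupp : ∀ᵐ u ∂μ, ‖u‖ = 1)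
    (hinv : ∀ O : EuclideanSpace ℝ (Fin N) ≃ₗᵢ[ℝ] EuclideanSpace ℝ (Fin N), μ.map O = μ)
    (F : Matrix (Fin N) (Fin N) ℝ) (hsym : ∀ i j, F j i = F i j) (d c : ℝ)
    (hd : ∀ i, mm μ i i i i = d) (hc : ∀ i k : Fin N, i ≠ k → mm μ i i k k = c) :
    (∫ u, (∑ i : Fin N, ∑ j : Fin N, u i * F i j * u j) ^ 2 ∂μ
        = d * (∑ i : Fin N, F i i ^ 2)
          + c * (∑ i : Fin N, ∑ k ∈ Finset.univ.erase i, F i i * F k k)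
          + 2 * c * (∑ i : Fin N, ∑ j ∈ Finset.univ.erase i, F i j ^ 2))
      ∧ (N : ℝ) * (d + ((N : ℝ) - 1) * c) = 1 := by
  constructor
  · rw [expand_integral hsupp F,
      Finset.sum_congr rfl fun i _ => Finset.sum_congr rfl fun j _ =>
        Finset.sum_congr rfl fun k _ => Finset.sum_congr rfl fun l _ => by
          rw [mm_pattern hinv d c hd hc i j k l],
      quad_sum F d c]
    have : ∑ i : Fin N, ∑ j ∈ Finset.univ.erase i, (F i j * F i j + F i j * F j i)
        = 2 * ∑ i : Fin N, ∑ j ∈ Finset.univ.erase i, F i j ^ 2 := by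
      rw [Finset.mul_sum]
      apply Finset.sum_congr rfl
      intro i _
      rw [Finset.mul_sum]
      apply Finset.sum_congr rfl
      intro j _
      rw [hsym i j]
      ring
    rw [this]
    ring
  · have hrow : ∀ i : Fin N, ∑ k : Fin N, mm μ i i k k = d + ((N : ℝ) - 1) * c := by
      intro i
      rw [← Finset.add_sum_erase _ _ (Finset.mem_univ i), hd i,
        Finset.sum_congr rfl (fun k hk => hc i k (Ne.symm (Finset.mem_erase.1 hk).1)),
        Finset.sum_const, nsmul_eq_mul, Finset.card_erase_of_mem (Finset.mem_univ i),
        Finset.card_univ, Fintype.card_fin, Nat.cast_sub hN, Nat.cast_one]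
    have := sum_mm_diag (μ := μ) hsupp
    rw [Finset.sum_congr rfl (fun i _ => hrow i), Finset.sum_const, nsmul_eq_mul,
      Finset.card_univ, Fintype.card_fin] at this
    exact this

lemma ineq_part (hN : 1 ≤ N) (hsupp : ∀ᵐ u ∂μ, ‖u‖ = 1)
    (hinv : ∀ O : EuclideanSpace ℝ (Fin N) ≃ₗᵢ[ℝ] EuclideanSpace ℝ (Fin N), μ.map O = μ)
    (F : Matrix (Fin N) (Fin N) ℝ) (hsym : ∀ i j, F j i = F i j) :
    ∫ u, (∑ i : Fin N, ∑ j : Fin N, u i * F i j * u j) ^ 2 ∂μ ≤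
      (1 / (N : ℝ) ^ 2) *
        (3 * ∑ i : Fin N, F i i ^ 2 +
          ∑ i : Fin N, ∑ j ∈ Finset.univ.erase i, F i i * F j j +
          2 * ∑ i : Fin N, ∑ j ∈ Finset.univ.erase i, F i j ^ 2) := by
  classical
  set a := ∑ i : Fin N, F i i ^ 2 with ha
  set b := ∑ i : Fin N, ∑ j ∈ Finset.univ.erase i, F i i * F j j with hb
  set e := ∑ i : Fin N, ∑ j ∈ Finset.univ.erase i, F i j ^ 2 with he
  have ha0 : 0 ≤ a := Finset.sum_nonneg fun i _ => sq_nonneg _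
  have he0 : 0 ≤ e := Finset.sum_nonneg fun i _ =>
    Finset.sum_nonneg fun j _ => sq_nonneg _
  have e1 : (∑ i : Fin N, F i i) ^ 2 = a + b := by
    rw [sq, Finset.sum_mul_sum, ha, hb, ← Finset.sum_add_distrib]
    apply Finset.sum_congr rfl
    intro i _
    rw [← Finset.add_sum_erase _ _ (Finset.mem_univ i), sq]
  by_cases hN2 : 2 ≤ N
  · -- N ≥ 2
    set i0 : Fin N := ⟨0, by omega⟩ with hi0
    set i1 : Fin N := ⟨1, by omega⟩ with hi1
    have hi01 : i0 ≠ i1 := by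
      intro h
      have := congrArg Fin.val h
      simp [hi0, hi1] at this
    set c := mm μ i0 i0 i1 i1 with hcdef
    have hd : ∀ i, mm μ i i i i = 3 * c := by
      intro i
      rw [mm_diag_eq hinv i i0, mm_rot hsupp hinv i0 i1 hi01]
    have hc : ∀ i k : Fin N, i ≠ k → mm μ i i k k = c := by
      intro i k hik
      exact mm_pair_eq hinv hik hi01
    obtain ⟨heval, hconstr⟩ := eval_and_constraint hN hsupp hinv F hsym (3*c) c hd hc
    rw [heval]
    have hcval : c * ((N : ℝ) * ((N : ℝ) + 2)) = 1 := by ring_nf; ring_nf at hconstr; linarith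
    have hNpos : (0:ℝ) < N := by positivity
    have hc_le : c ≤ 1 / (N : ℝ) ^ 2 := by
      have h1 : (0:ℝ) < (N : ℝ) * ((N : ℝ) + 2) := by positivity
      have : c = 1 / ((N : ℝ) * ((N : ℝ) + 2)) := by
        field_simp at hcval ⊢
        linarith
      rw [this]
      apply div_le_div_of_nonneg_left one_pos.le (by positivity)
      nlinarith
    have hE : 0 ≤ 3 * a + b + 2 * e := by nlinarith [sq_nonneg (∑ i : Fin N, F i i), e1]
    calc 3 * c * a + c * b + 2 * c * e = c * (3 * a + b + 2 * e) := by ring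
      _ ≤ (1 / (N : ℝ) ^ 2) * (3 * a + b + 2 * e) := mul_le_mul_of_nonneg_right hc_le hE
  · -- N = 1
    have hN1 : N = 1 := by omega
    have hsub : ∀ i : Fin N, (Finset.univ.erase i) = (∅ : Finset (Fin N)) := by
      intro i
      apply Finset.eq_empty_of_forall_notMem
      intro x hx
      have : x = i := by
        subst hN1
        exact Subsingleton.elim x i
      exact (Finset.mem_erase.1 hx).1 this
    have hb0 : b = 0 := by rw [hb]; simp [hsub]
    have he00 : e = 0 := by rw [he]; simp [hsub]
    set d := mm μ ⟨0, by omega⟩ ⟨0, by omega⟩ ⟨0, by omega⟩ ⟨0, by omega⟩ with hddef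
    have hd : ∀ i, mm μ i i i i = d := fun i => mm_diag_eq hinv i _
    have hc : ∀ i k : Fin N, i ≠ k → mm μ i i k k = 0 := by
      intro i k hik
      exfalso
      apply hik
      subst hN1
      exact Subsingleton.elim i k
    obtain ⟨heval, hconstr⟩ := eval_and_constraint hN hsupp hinv F hsym d 0 hd hc
    have hd1 : d = 1 := by
      rw [hN1] at hconstr
      norm_num at hconstr
      exact hconstr
    rw [heval, ← ha, ← hb, ← he, hb0, he00, hd1, hN1]
    norm_num
    linarith

end Aux

/-- Second moment bound for the quadratic form `u* A^k u` with `u` uniform on the sphere: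
`E[(u* F u)²] ≤ (1/N²)(3 ∑ F_ii² + ∑_{i≠j} F_ii F_jj + 2 ∑_{i≠j} F_ij²)
  = ((1/N) Tr F)² + (2/N²) Tr F²`, where `F = A^k`. -/
theorem quadratic_form_second_moment_bound (N : ℕ) (hN : 1 ≤ N)
    (μ : Measure (EuclideanSpace ℝ (Fin N))) [IsProbabilityMeasure μ]
    (hsupp : ∀ᵐ u ∂μ, ‖u‖ = 1)
    (hinv : ∀ O : EuclideanSpace ℝ (Fin N) ≃ₗᵢ[ℝ] EuclideanSpace ℝ (Fin N), μ.map O = μ)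
    (A : Matrix (Fin N) (Fin N) ℝ) (hA : A.IsSymm) (k : ℕ) (F : Matrix (Fin N) (Fin N) ℝ)
    (hF : F = A ^ k) :
    (∫ u, (∑ i : Fin N, ∑ j : Fin N, u i * F i j * u j) ^ 2 ∂μ ≤
      (1 / (N : ℝ) ^ 2) *
        (3 * ∑ i : Fin N, F i i ^ 2 +
          ∑ i : Fin N, ∑ j ∈ Finset.univ.erase i, F i i * F j j +
          2 * ∑ i : Fin N, ∑ j ∈ Finset.univ.erase i, F i j ^ 2)) ∧
    (1 / (N : ℝ) ^ 2) *
        (3 * ∑ i : Fin N, F i i ^ 2 +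
          ∑ i : Fin N, ∑ j ∈ Finset.univ.erase i, F i i * F j j +
          2 * ∑ i : Fin N, ∑ j ∈ Finset.univ.erase i, F i j ^ 2) =
      ((1 / (N : ℝ)) * (F.trace)) ^ 2 + (2 / (N : ℝ) ^ 2) * ((F ^ 2).trace) := by
  have hFsymm : F.IsSymm := hF ▸ hA.pow k
  have hsym : ∀ i j, F j i = F i j := fun i j => hFsymm.apply i j
  constructor
  · exact ineq_part hN hsupp hinv F hsym
  · have ht : F.trace = ∑ i : Fin N, F i i := rfl
    have hs : (F ^ 2).trace = ∑ i : Fin N, ∑ j : Fin N, F i j * F j i := by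
      rw [pow_two, Matrix.trace]
      apply Finset.sum_congr rfl
      intro i _
      rw [Matrix.diag_apply, Matrix.mul_apply]
    have e1 : (∑ i : Fin N, F i i) ^ 2
        = (∑ i : Fin N, F i i ^ 2) + ∑ i : Fin N, ∑ j ∈ Finset.univ.erase i, F i i * F j j := by
      rw [sq, Finset.sum_mul_sum, ← Finset.sum_add_distrib]
      apply Finset.sum_congr rfl
      intro i _
      rw [← Finset.add_sum_erase _ _ (Finset.mem_univ i), sq]
    have e2 : ∑ i : Fin N, ∑ j : Fin N, F i j * F j i
        = (∑ i : Fin N, F i i ^ 2) + ∑ i : Fin N, ∑ j ∈ Finset.univ.erase i, F i j ^ 2 := by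
      rw [← Finset.sum_add_distrib]
      apply Finset.sum_congr rfl
      intro i _
      rw [← Finset.add_sum_erase _ _ (Finset.mem_univ i)]
      congr 1
      · rw [sq]
      · apply Finset.sum_congr rfl
        intro j _
        rw [hsym i j, sq]
    rw [ht, hs, e2, mul_pow, e1]
    ring
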